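/- Let β ∈ (0,1) and set δ = (1/β - 1)/2. For integers 1 ≤ k ≤ t-1, define C_{t,k} = (γ/2)β^{t-k} + (1+1/δ)(γ/2 + η) Σ_{l=k}^{t-1} β^{t-l}((1+δ)β²)^{l-k}, where γ ≥ 0 and η > 0. Then C_{t,k} ≤ ( γ/2 + (1+β)(γ+2η)/(1-β)² ) β^{t-k}. -/

import Mathlib

theorem C_tk_bound (β γ η : ℝ) (hβ0 : 0 < β) (hβ1 : β < 1)
    (hγ : 0 ≤ γ) (hη : 0 < η) (t k : ℕ) (hk : 1 ≤ k) (hkt : k ≤ t - 1) (ht : 2 ≤ t) :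
    let δ : ℝ := (1 / β - 1) / 2
    (γ / 2) * β ^ (t - k) +
      (1 + 1 / δ) * (γ / 2 + η) *
        ∑ l ∈ Finset.Icc k (t - 1), β ^ (t - l) * ((1 + δ) * β ^ 2) ^ (l - k)
    ≤ (γ / 2 + (1 + β) * (γ + 2 * η) / (1 - β) ^ 2) * β ^ (t - k) := by
  intro δ
  have hβ0' : β ≠ 0 := ne_of_gt hβ0
  have h1β : 0 < 1 - β := by linarith
  have hδ : δ = (1 - β) / (2 * β) := by
    show (1 / β - 1) / 2 = (1 - β) / (2 * β)
    field_simp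
  have hδ0 : 0 < δ := by rw [hδ]; positivity
  set r : ℝ := (1 + β) / 2 with hr
  have hr0 : 0 ≤ r := by positivity
  have hr1 : r < 1 := by rw [hr]; linarith
  have hq : (1 + δ) * β ^ 2 = r * β := by
    rw [hδ, hr]; field_simp; ring
  have hfac : 1 + 1 / δ = (1 + β) / (1 - β) := by
    rw [hδ]; field_simp; ring
  have hsum : ∑ l ∈ Finset.Icc k (t - 1), β ^ (t - l) * ((1 + δ) * β ^ 2) ^ (l - k)
      ≤ β ^ (t - k) * (1 / (1 - r)) := by
    have hcongr : ∑ l ∈ Finset.Icc k (t - 1), β ^ (t - l) * ((1 + δ) * β ^ 2) ^ (l - k)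
        = ∑ l ∈ Finset.Icc k (t - 1), β ^ (t - k) * r ^ (l - k) := by
      refine Finset.sum_congr rfl fun l hl => ?_
      simp only [Finset.mem_Icc] at hl
      have hpow : β ^ (t - l) * β ^ (l - k) = β ^ (t - k) := by
        rw [← pow_add]; congr 1; omega
      calc β ^ (t - l) * ((1 + δ) * β ^ 2) ^ (l - k)
          = β ^ (t - l) * (r ^ (l - k) * β ^ (l - k)) := by rw [hq, mul_pow]
        _ = (β ^ (t - l) * β ^ (l - k)) * r ^ (l - k) := by ring
        _ = β ^ (t - k) * r ^ (l - k) := by rw [hpow]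
    rw [hcongr, ← Finset.mul_sum]
    have hbound : ∑ l ∈ Finset.Icc k (t - 1), r ^ (l - k) ≤ 1 / (1 - r) := by
      have hIcc : Finset.Icc k (t - 1) = Finset.Ico k t := by
        rw [← Finset.Ico_add_one_right_eq_Icc]; congr 1; omega
      have hre : ∑ l ∈ Finset.Icc k (t - 1), r ^ (l - k)
          = ∑ i ∈ Finset.range (t - k), r ^ i := by
        rw [hIcc, Finset.sum_Ico_eq_sum_range]
        exact Finset.sum_congr rfl fun i _ => by congr 1; omega
      rw [hre, geom_sum_eq hr1.ne]
      have hp : 0 ≤ r ^ (t - k) := pow_nonneg hr0 _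
      have heq : (r ^ (t - k) - 1) / (r - 1) = (1 - r ^ (t - k)) / (1 - r) := by
        rw [div_eq_div_iff (by linarith) (by linarith)]; ring
      rw [heq]
      gcongr
      · linarith
    exact mul_le_mul_of_nonneg_left hbound (by positivity)
  have hcoef : 0 ≤ (1 + 1 / δ) * (γ / 2 + η) := by
    have : 0 < 1 / δ := by positivity
    nlinarith
  have hmain : (1 + 1 / δ) * (γ / 2 + η) *
        ∑ l ∈ Finset.Icc k (t - 1), β ^ (t - l) * ((1 + δ) * β ^ 2) ^ (l - k)
      ≤ (1 + 1 / δ) * (γ / 2 + η) * (β ^ (t - k) * (1 / (1 - r))) :=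
    mul_le_mul_of_nonneg_left hsum hcoef
  have hrw : (1 + 1 / δ) * (γ / 2 + η) * (β ^ (t - k) * (1 / (1 - r)))
      = (1 + β) * (γ + 2 * η) / (1 - β) ^ 2 * β ^ (t - k) := by
    rw [hfac, hr]
    have h2 : (1 : ℝ) - (1 + β) / 2 = (1 - β) / 2 := by ring
    rw [h2]
    field_simp
  linarith [hmain, hrw ▸ hmain]
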